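/- If L is a subdirectly irreducible pm-algebra, then either Body(L) has fewer than two elements, or Body(L) = {P, φ(P)} for some prime filter P with φ(P) ≠ P. -/
import Mathlib


/-- A pseudocomplemented De Morgan algebra (pm-algebra): a bounded distributive
lattice with a De Morgan involution `dm` and a pseudocomplement `pc`. -/
class PMAlgebra (L : Type*) extends DistribLattice L, BoundedOrder L where
  dm : L → L
  pc : L → L
  dm_dm : ∀ a : L, dm (dm a) = a
  dm_inf : ∀ a b : L, dm (a ⊓ b) = dm a ⊔ dm b
  pc_iff : ∀ a b : L, a ⊓ b = ⊥ ↔ b ≤ pc a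

namespace PMAlgebra

variable {L : Type*} [PMAlgebra L]

/-- A congruence of a pm-algebra. -/
def IsCongruence (θ : L → L → Prop) : Prop :=
  Equivalence θ ∧
  (∀ a b c d : L, θ a b → θ c d → θ (a ⊓ c) (b ⊓ d)) ∧
  (∀ a b c d : L, θ a b → θ c d → θ (a ⊔ c) (b ⊔ d)) ∧
  (∀ a b : L, θ a b → θ (dm a) (dm b)) ∧
  (∀ a b : L, θ a b → θ (pc a) (pc b))

/-- `L` is simple: it has more than one element and its only congruences are
equality and the total relation. -/
def Simple (L : Type*) [PMAlgebra L] : Prop :=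
  Nontrivial L ∧ ∀ θ : L → L → Prop, IsCongruence θ →
    θ = (fun a b => a = b) ∨ θ = (fun _ _ => True)

/-- `L` is subdirectly irreducible: there is a congruence `μ ≠ Eq` contained in
every congruence different from equality. -/
def SubdirectlyIrreducible (L : Type*) [PMAlgebra L] : Prop :=
  ∃ μ : L → L → Prop, IsCongruence μ ∧ μ ≠ (fun a b => a = b) ∧
    ∀ θ : L → L → Prop, IsCongruence θ → θ ≠ (fun a b => a = b) →
      ∀ a b : L, μ a b → θ a b

/-- A prime filter of the underlying lattice of `L`. -/
def IsPrimeFilter (P : Set L) : Prop :=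
  P.Nonempty ∧ P ≠ Set.univ ∧
  (∀ a b : L, a ∈ P → a ≤ b → b ∈ P) ∧
  (∀ a b : L, a ∈ P → b ∈ P → a ⊓ b ∈ P) ∧
  (∀ a b : L, a ⊔ b ∈ P → a ∈ P ∨ b ∈ P)

/-- The Birula–Rasiowa transformation. -/
def phi (P : Set L) : Set L := {a : L | dm a ∉ P}

/-- `P` is a maximal prime filter. -/
def IsMaximalPF (P : Set L) : Prop :=
  IsPrimeFilter P ∧ ∀ Q : Set L, IsPrimeFilter Q → P ⊆ Q → Q = P

/-- `P` is a minimal prime filter. -/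
def IsMinimalPF (P : Set L) : Prop :=
  IsPrimeFilter P ∧ ∀ Q : Set L, IsPrimeFilter Q → Q ⊆ P → Q = P

/-- The body of `L`: prime filters that are neither maximal nor minimal. -/
def body (L : Type*) [PMAlgebra L] : Set (Set L) :=
  {P : Set L | IsPrimeFilter P ∧ ¬ IsMaximalPF P ∧ ¬ IsMinimalPF P}

/-- The prime filter space of `L` is φ-connected. -/
def PhiConnected (L : Type*) [PMAlgebra L] : Prop :=
  ∀ S : Set (Set L), S ⊆ {P : Set L | IsPrimeFilter P} → S.Nonempty →
    (∀ P Q : Set L, P ∈ S → IsPrimeFilter Q → P ⊆ Q → Q ∈ S) →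
    (∀ P Q : Set L, P ∈ S → IsPrimeFilter Q → Q ⊆ P → Q ∈ S) →
    (∀ P : Set L, P ∈ S → phi P ∈ S) →
    S = {P : Set L | IsPrimeFilter P}

/-- The Kleene identity. -/
def Kleene (L : Type*) [PMAlgebra L] : Prop :=
  ∀ a b : L, a ⊓ dm a ≤ b ⊔ dm b

/-- The term `C(x) = (x ∧ x') ∨ (x ∧ x')*`. -/
def C (x : L) : L := (x ⊓ dm x) ⊔ pc (x ⊓ dm x)

/-- The term `T(x) = C(x) ∧ C(x)'`. -/
def T (x : L) : L := C x ⊓ dm (C x)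

end PMAlgebra

open PMAlgebra

namespace PMAlgebra

variable {L : Type*} [PMAlgebra L]

/-! ### Basic De Morgan facts -/

theorem dm_le_dm {a b : L} (h : a ≤ b) : dm b ≤ dm a := by
  have h2 : dm a = dm a ⊔ dm b := by rw [← dm_inf, inf_eq_left.mpr h]
  rw [h2]; exact le_sup_right

theorem dm_top : dm (⊤ : L) = ⊥ := by
  have h := dm_le_dm (le_top : dm (⊥ : L) ≤ ⊤)
  rwa [dm_dm, le_bot_iff] at h

theorem dm_bot : dm (⊥ : L) = ⊤ := by
  have h := congrArg dm (dm_top (L := L))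
  rw [dm_dm] at h
  exact h.symm

theorem dm_sup' (a b : L) : dm (a ⊔ b) = dm a ⊓ dm b := by
  have h := congrArg dm (dm_inf (dm a) (dm b))
  simp only [dm_dm] at h
  exact h.symm

theorem inf_pc_self (a : L) : a ⊓ pc a = ⊥ := (pc_iff a (pc a)).2 le_rfl

/-! ### Prime filter basics -/

theorem top_mem {P : Set L} (hP : IsPrimeFilter P) : ⊤ ∈ P := by
  obtain ⟨⟨p, hp⟩, -, hup, -, -⟩ := hP
  exact hup p ⊤ hp le_top

theorem bot_not_mem {P : Set L} (hP : IsPrimeFilter P) : ⊥ ∉ P := by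
  intro h
  apply hP.2.1
  apply Set.eq_univ_iff_forall.mpr
  intro x
  exact hP.2.2.1 ⊥ x h bot_le

theorem mem_inf_iff {P : Set L} (hP : IsPrimeFilter P) {a b : L} :
    a ⊓ b ∈ P ↔ a ∈ P ∧ b ∈ P :=
  ⟨fun h => ⟨hP.2.2.1 _ _ h inf_le_left, hP.2.2.1 _ _ h inf_le_right⟩,
   fun ⟨h1, h2⟩ => hP.2.2.2.1 _ _ h1 h2⟩

theorem mem_sup_iff {P : Set L} (hP : IsPrimeFilter P) {a b : L} :
    a ⊔ b ∈ P ↔ a ∈ P ∨ b ∈ P :=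
  ⟨hP.2.2.2.2 a b,
   fun h => h.elim (fun h => hP.2.2.1 _ _ h le_sup_left) (fun h => hP.2.2.1 _ _ h le_sup_right)⟩

/-! ### The Birula–Rasiowa transformation -/

theorem mem_phi_iff {P : Set L} {a : L} : a ∈ phi P ↔ dm a ∉ P := Iff.rfl

theorem dm_mem_iff {P : Set L} {a : L} : dm a ∈ P ↔ a ∉ phi P := by
  simp only [phi, Set.mem_setOf_eq, not_not]

theorem phi_phi (P : Set L) : phi (phi P) = P := by
  ext a
  simp only [phi, Set.mem_setOf_eq, dm_dm, not_not]

theorem phi_inj {P Q : Set L} (h : phi P = phi Q) : P = Q := by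
  have := congrArg phi h
  rwa [phi_phi, phi_phi] at this

theorem phi_subset {P Q : Set L} (h : P ⊆ Q) : phi Q ⊆ phi P :=
  fun _ ha hmem => ha (h hmem)

theorem phi_prime {P : Set L} (hP : IsPrimeFilter P) : IsPrimeFilter (phi P) := by
  refine ⟨⟨⊤, ?_⟩, ?_, ?_, ?_, ?_⟩
  · show dm ⊤ ∉ P
    rw [dm_top]
    exact bot_not_mem hP
  · intro h
    have hb : (⊥ : L) ∈ phi P := h ▸ Set.mem_univ ⊥
    have hb' : dm (⊥ : L) ∉ P := hb
    rw [dm_bot] at hb'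
    exact hb' (top_mem hP)
  · intro a b ha hab hb
    exact ha (hP.2.2.1 (dm b) (dm a) hb (dm_le_dm hab))
  · intro a b ha hb
    show dm (a ⊓ b) ∉ P
    rw [dm_inf]
    intro h
    rcases hP.2.2.2.2 _ _ h with h' | h'
    · exact ha h'
    · exact hb h'
  · intro a b hab
    by_contra hc
    push_neg at hc
    simp only [mem_phi_iff, not_not] at hc
    apply hab
    show dm (a ⊔ b) ∈ P
    rw [dm_sup']
    exact hP.2.2.2.1 _ _ hc.1 hc.2

/-! ### Zorn-style extension lemmas -/

/-- A (not necessarily proper) filter. -/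
def IsFilt (F : Set L) : Prop :=
  F.Nonempty ∧ (∀ a b : L, a ∈ F → a ≤ b → b ∈ F) ∧ (∀ a b : L, a ∈ F → b ∈ F → a ⊓ b ∈ F)

theorem exists_maximal_filter (F : Set L) (hF : IsFilt F) (I : L)
    (hFI : ∀ g ∈ F, ¬ g ≤ I) :
    ∃ M : Set L, IsPrimeFilter M ∧ F ⊆ M ∧ (∀ g ∈ M, ¬ g ≤ I) ∧
      ∀ G : Set L, IsFilt G → (∀ g ∈ G, ¬ g ≤ I) → M ⊆ G → G ⊆ M := by
  classical
  set S : Set (Set L) := {G | IsFilt G ∧ (∀ g ∈ G, ¬ g ≤ I) ∧ F ⊆ G} with hS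
  have hchain : ∀ c ⊆ S, IsChain (· ⊆ ·) c → c.Nonempty → ∃ ub ∈ S, ∀ s ∈ c, s ⊆ ub := by
    rintro c hcS hchain ⟨G0, hG0⟩
    refine ⟨⋃₀ c, ⟨⟨?_, ?_, ?_⟩, ?_, ?_⟩, fun s hs => Set.subset_sUnion_of_mem hs⟩
    · obtain ⟨p, hp⟩ := (hcS hG0).1.1
      exact ⟨p, G0, hG0, hp⟩
    · rintro a b ⟨G, hG, haG⟩ hab
      exact ⟨G, hG, (hcS hG).1.2.1 a b haG hab⟩
    · rintro a b ⟨G1, hG1, ha⟩ ⟨G2, hG2, hb⟩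
      rcases hchain.total hG1 hG2 with h | h
      · exact ⟨G2, hG2, (hcS hG2).1.2.2 a b (h ha) hb⟩
      · exact ⟨G1, hG1, (hcS hG1).1.2.2 a b ha (h hb)⟩
    · rintro g ⟨G, hG, hgG⟩
      exact (hcS hG).2.1 g hgG
    · exact fun f hf => ⟨G0, hG0, (hcS hG0).2.2 hf⟩
  obtain ⟨M, hFM, hMmax⟩ := zorn_subset_nonempty S hchain F ⟨hF, hFI, Set.Subset.rfl⟩
  obtain ⟨⟨hMfilt, hMI, -⟩, hMub⟩ := hMmax
  have hmax' : ∀ G : Set L, IsFilt G → (∀ g ∈ G, ¬ g ≤ I) → M ⊆ G → G ⊆ M := by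
    intro G hG hGI hsub
    exact hMub ⟨hG, hGI, hFM.trans hsub⟩ hsub
  have gen : ∀ u : L, u ∉ M → ∃ m ∈ M, m ⊓ u ≤ I := by
    intro u hu
    by_contra hno
    push_neg at hno
    obtain ⟨m0, hm0⟩ := hMfilt.1
    have hGfilt : IsFilt {t | ∃ m ∈ M, m ⊓ u ≤ t} := by
      refine ⟨⟨u, m0, hm0, inf_le_right⟩, ?_, ?_⟩
      · rintro s t ⟨m, hm, hle⟩ hst
        exact ⟨m, hm, hle.trans hst⟩
      · rintro s t ⟨m1, hm1, hle1⟩ ⟨m2, hm2, hle2⟩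
        refine ⟨m1 ⊓ m2, hMfilt.2.2 _ _ hm1 hm2, le_inf ?_ ?_⟩
        · exact le_trans (inf_le_inf_right u inf_le_left) hle1
        · exact le_trans (inf_le_inf_right u inf_le_right) hle2
    have hGI : ∀ g ∈ {t | ∃ m ∈ M, m ⊓ u ≤ t}, ¬ g ≤ I := by
      rintro g ⟨m, hm, hle⟩ hgI
      exact hno m hm (hle.trans hgI)
    have hGM : {t | ∃ m ∈ M, m ⊓ u ≤ t} ⊆ M :=
      hmax' _ hGfilt hGI (fun m hm => ⟨m, hm, inf_le_left⟩)
    exact hu (hGM ⟨m0, hm0, inf_le_right⟩)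
  have hprime : IsPrimeFilter M := by
    refine ⟨hMfilt.1, ?_, hMfilt.2.1, hMfilt.2.2, ?_⟩
    · intro h
      exact hMI I (h ▸ Set.mem_univ I) le_rfl
    · intro a b hab
      by_contra hc
      push_neg at hc
      obtain ⟨ha, hb⟩ := hc
      obtain ⟨m1, hm1, hle1⟩ := gen a ha
      obtain ⟨m2, hm2, hle2⟩ := gen b hb
      have hmem : m1 ⊓ m2 ⊓ (a ⊔ b) ∈ M :=
        hMfilt.2.2 _ _ (hMfilt.2.2 _ _ hm1 hm2) hab
      have hle : m1 ⊓ m2 ⊓ (a ⊔ b) ≤ I := by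
        rw [inf_sup_left]
        refine sup_le (le_trans ?_ hle1) (le_trans ?_ hle2)
        · exact inf_le_inf_right a inf_le_left
        · exact inf_le_inf_right b inf_le_right
      exact hMI _ hmem hle
  exact ⟨M, hprime, hFM, hMI, hmax'⟩

theorem exists_prime_sep {a b : L} (h : ¬ a ≤ b) :
    ∃ R : Set L, IsPrimeFilter R ∧ a ∈ R ∧ b ∉ R := by
  have hF : IsFilt {t : L | a ≤ t} :=
    ⟨⟨a, le_rfl⟩, fun s t hs hst => hs.trans hst, fun s t hs ht => le_inf hs ht⟩
  obtain ⟨M, hM, hFM, hMI, -⟩ := exists_maximal_filter {t : L | a ≤ t} hF b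
    (fun g hg hgb => h (le_trans hg hgb))
  exact ⟨M, hM, hFM le_rfl, fun hbM => hMI b hbM le_rfl⟩

theorem exists_maxPF_ext (F : Set L) (hF : IsFilt F) (hbot : ∀ g ∈ F, g ≠ ⊥) :
    ∃ M : Set L, IsMaximalPF M ∧ F ⊆ M := by
  obtain ⟨M, hM, hFM, hMI, hmax⟩ := exists_maximal_filter F hF ⊥
    (fun g hg hgb => hbot g hg (le_bot_iff.mp hgb))
  refine ⟨M, ⟨hM, ?_⟩, hFM⟩
  intro Q hQ hMQ
  have hQfilt : IsFilt Q := ⟨hQ.1, hQ.2.2.1, hQ.2.2.2.1⟩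
  have hQI : ∀ g ∈ Q, ¬ g ≤ ⊥ := by
    intro g hg hgb
    rw [le_bot_iff] at hgb
    exact bot_not_mem hQ (hgb ▸ hg)
  exact Set.Subset.antisymm (hmax Q hQfilt hQI hMQ) hMQ

/-! ### Maximal and minimal prime filters -/

theorem max_prime_pc_mem {M : Set L} (hM : IsMaximalPF M) {c : L} (hc : c ∉ M) :
    pc c ∈ M := by
  classical
  by_cases hbot : ∀ g ∈ {t : L | ∃ m ∈ M, m ⊓ c ≤ t}, g ≠ (⊥ : L)
  · exfalso
    obtain ⟨m0, hm0⟩ := hM.1.1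
    have hGfilt : IsFilt {t : L | ∃ m ∈ M, m ⊓ c ≤ t} := by
      refine ⟨⟨c, m0, hm0, inf_le_right⟩, ?_, ?_⟩
      · rintro s t ⟨m, hm, hle⟩ hst
        exact ⟨m, hm, hle.trans hst⟩
      · rintro s t ⟨m1, hm1, hle1⟩ ⟨m2, hm2, hle2⟩
        refine ⟨m1 ⊓ m2, hM.1.2.2.2.1 _ _ hm1 hm2, le_inf ?_ ?_⟩
        · exact le_trans (inf_le_inf_right c inf_le_left) hle1
        · exact le_trans (inf_le_inf_right c inf_le_right) hle2
    obtain ⟨M', hM', hGM'⟩ := exists_maxPF_ext _ hGfilt hbot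
    have hMM' : M ⊆ M' := fun m hm => hGM' ⟨m, hm, inf_le_left⟩
    have : M' = M := hM.2 M' hM'.1 hMM'
    exact hc (this ▸ hGM' ⟨m0, hm0, inf_le_right⟩)
  · push_neg at hbot
    obtain ⟨g, ⟨m, hm, hle⟩, hg⟩ := hbot
    subst hg
    have hmc : c ⊓ m = ⊥ := by
      rw [inf_comm]
      exact le_bot_iff.mp hle
    exact hM.1.2.2.1 m (pc c) hm ((pc_iff c m).mp hmc)

theorem max_sup_pc_mem {M : Set L} (hM : IsMaximalPF M) (c : L) : c ⊔ pc c ∈ M := by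
  by_cases hc : c ∈ M
  · exact hM.1.2.2.1 c _ hc le_sup_left
  · exact hM.1.2.2.1 (pc c) _ (max_prime_pc_mem hM hc) le_sup_right

theorem min_phi_max {R : Set L} (hR : IsMinimalPF R) : IsMaximalPF (phi R) := by
  refine ⟨phi_prime hR.1, ?_⟩
  intro Q hQ hsub
  have h1 : phi Q ⊆ R := by
    have := phi_subset hsub
    rwa [phi_phi] at this
  have h2 : phi Q = R := hR.2 (phi Q) (phi_prime hQ) h1
  have := congrArg phi h2
  rwa [phi_phi] at this

theorem max_phi_min {M : Set L} (hM : IsMaximalPF M) : IsMinimalPF (phi M) := by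
  refine ⟨phi_prime hM.1, ?_⟩
  intro Q hQ hsub
  have h1 : M ⊆ phi Q := by
    have := phi_subset hsub
    rwa [phi_phi] at this
  have h2 : phi Q = M := hM.2 (phi Q) (phi_prime hQ) h1
  have := congrArg phi h2
  rwa [phi_phi] at this

theorem body_phi {P : Set L} (h : P ∈ body L) : phi P ∈ body L := by
  obtain ⟨hP, hmax, hmin⟩ := h
  refine ⟨phi_prime hP, ?_, ?_⟩
  · intro hm
    have := max_phi_min hm
    rw [phi_phi] at this
    exact hmin this
  · intro hm
    have := min_phi_max hm
    rw [phi_phi] at this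
    exact hmax this

theorem exists_gt_of_body {W : Set L} (h : W ∈ body L) :
    ∃ T : Set L, IsPrimeFilter T ∧ W ⊆ T ∧ T ≠ W := by
  by_contra hc
  push_neg at hc
  exact h.2.1 ⟨h.1, hc⟩

theorem exists_lt_of_body {W : Set L} (h : W ∈ body L) :
    ∃ T : Set L, IsPrimeFilter T ∧ T ⊆ W ∧ T ≠ W := by
  by_contra hc
  push_neg at hc
  exact h.2.2 ⟨h.1, hc⟩

/-! ### The removal congruence -/

theorem isCongruence_removal (C : Set (Set L))
    (hCmax : ∀ M : Set L, IsMaximalPF M → M ∉ C)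
    (hCphi : ∀ R : Set L, R ∈ C → phi R ∈ C) :
    IsCongruence (fun x y : L => ∀ R : Set L, IsPrimeFilter R → R ∉ C → (x ∈ R ↔ y ∈ R)) := by
  have auxpc : ∀ x y : L,
      (∀ R : Set L, IsPrimeFilter R → R ∉ C → (x ∈ R ↔ y ∈ R)) →
      ∀ R : Set L, IsPrimeFilter R → R ∉ C → pc x ∈ R → pc y ∈ R := by
    intro x y hxy R hR hRC hx
    by_contra hny
    have hFfilt : IsFilt {t : L | ∃ r ∈ R, r ⊓ y ≤ t} := by
      obtain ⟨r0, hr0⟩ := hR.1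
      refine ⟨⟨y, r0, hr0, inf_le_right⟩, ?_, ?_⟩
      · rintro s t ⟨r, hr, hle⟩ hst
        exact ⟨r, hr, hle.trans hst⟩
      · rintro s t ⟨r1, hr1, hle1⟩ ⟨r2, hr2, hle2⟩
        refine ⟨r1 ⊓ r2, hR.2.2.2.1 _ _ hr1 hr2, le_inf ?_ ?_⟩
        · exact le_trans (inf_le_inf_right y inf_le_left) hle1
        · exact le_trans (inf_le_inf_right y inf_le_right) hle2
    have hFbot : ∀ g ∈ {t : L | ∃ r ∈ R, r ⊓ y ≤ t}, g ≠ (⊥ : L) := by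
      rintro g ⟨r, hr, hle⟩ hg
      subst hg
      have hyr : y ⊓ r = ⊥ := by
        rw [inf_comm]
        exact le_bot_iff.mp hle
      exact hny (hR.2.2.1 r (pc y) hr ((pc_iff y r).mp hyr))
    obtain ⟨M, hM, hFM⟩ := exists_maxPF_ext _ hFfilt hFbot
    obtain ⟨r0, hr0⟩ := hR.1
    have hyM : y ∈ M := hFM ⟨r0, hr0, inf_le_right⟩
    have hRM : R ⊆ M := fun r hr => hFM ⟨r, hr, inf_le_left⟩
    have hxM : x ∈ M := (hxy M hM.1 (hCmax M hM)).2 hyM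
    have hbM : (⊥ : L) ∈ M := by
      have := hM.1.2.2.2.1 _ _ hxM (hRM hx)
      rwa [inf_pc_self] at this
    exact bot_not_mem hM.1 hbM
  constructor
  · exact ⟨fun x R hR hRC => Iff.rfl,
      fun h R hR hRC => (h R hR hRC).symm,
      fun h1 h2 R hR hRC => (h1 R hR hRC).trans (h2 R hR hRC)⟩
  refine ⟨?_, ?_, ?_, ?_⟩
  · intro a b c d hab hcd R hR hRC
    rw [mem_inf_iff hR, mem_inf_iff hR, hab R hR hRC, hcd R hR hRC]
  · intro a b c d hab hcd R hR hRC
    rw [mem_sup_iff hR, mem_sup_iff hR, hab R hR hRC, hcd R hR hRC]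
  · intro a b hab R hR hRC
    have hφ : phi R ∉ C := by
      intro h
      have := hCphi _ h
      rw [phi_phi] at this
      exact hRC this
    have hiff := hab (phi R) (phi_prime hR) hφ
    rw [dm_mem_iff, dm_mem_iff]
    exact not_congr hiff
  · intro a b hab R hR hRC
    constructor
    · exact auxpc a b hab R hR hRC
    · refine auxpc b a ?_ R hR hRC
      intro S hS hSC
      exact (hab S hS hSC).symm

end PMAlgebra

/-- In a subdirectly irreducible pm-algebra either the body has fewer than two
elements or it is of the form `{P, φ(P)}` with `φ(P) ≠ P`. -/
theorem body_of_subdirectlyIrreducible {L : Type*} [PMAlgebra L]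
    (hsi : SubdirectlyIrreducible L) :
    (body L).encard < 2 ∨
      ∃ P : Set L, IsPrimeFilter P ∧ phi P ≠ P ∧ body L = {P, phi P} := by
  classical
  by_cases h1 : (body L).encard < 2
  · exact Or.inl h1
  by_cases h2 : ∃ P : Set L, IsPrimeFilter P ∧ phi P ≠ P ∧ body L = {P, phi P}
  · exact Or.inr h2
  exfalso
  -- the body contains two distinct elements
  have hlt : 1 < (body L).encard := by
    have h12 : (1 : ℕ∞) < 2 := by norm_num
    exact lt_of_lt_of_le h12 (not_lt.mp h1)
  obtain ⟨P0, Q0, hP0, hQ0, hPQ0⟩ := Set.one_lt_encard_iff.mp hlt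
  -- get P, Q ∈ body with Q ∉ {P, phi P}
  obtain ⟨P, Q, hPb, hQb, hQP, hQφP⟩ :
      ∃ P Q : Set L, P ∈ body L ∧ Q ∈ body L ∧ Q ≠ P ∧ Q ≠ phi P := by
    by_cases hc : Q0 = phi P0
    · by_cases hex : ∃ R ∈ body L, R ≠ P0 ∧ R ≠ phi P0
      · obtain ⟨R, hR, hr1, hr2⟩ := hex
        exact ⟨P0, R, hP0, hR, hr1, hr2⟩
      · exfalso
        apply h2
        refine ⟨P0, hP0.1, hc ▸ hPQ0.symm, ?_⟩
        apply Set.Subset.antisymm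
        · intro R hR
          by_contra hRn
          simp only [Set.mem_insert_iff, Set.mem_singleton_iff, not_or] at hRn
          exact hex ⟨R, hR, hRn.1, hRn.2⟩
        · rintro R (rfl | rfl)
          · exact hP0
          · exact hc ▸ hQ0
    · exact ⟨P0, Q0, hP0, hQ0, hPQ0.symm, hc⟩
  -- monolith data
  obtain ⟨μ, hμc, hμne, hμmin⟩ := hsi
  obtain ⟨a, b, hμab, hab⟩ : ∃ a b : L, μ a b ∧ a ≠ b := by
    by_contra h
    push_neg at h
    apply hμne
    funext u v
    apply propext
    exact ⟨fun hm => h u v hm, fun he => he ▸ hμc.1.refl u⟩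
  -- a prime filter separating a and b
  obtain ⟨R₀, hR₀, hR₀ne⟩ : ∃ R₀ : Set L, IsPrimeFilter R₀ ∧ ¬ (a ∈ R₀ ↔ b ∈ R₀) := by
    have hor : ¬ a ≤ b ∨ ¬ b ≤ a := by
      by_contra h
      push_neg at h
      exact hab (le_antisymm h.1 h.2)
    rcases hor with h | h
    · obtain ⟨R, hR, haR, hbR⟩ := exists_prime_sep h
      exact ⟨R, hR, fun hiff => hbR (hiff.mp haR)⟩
    · obtain ⟨R, hR, hbR, haR⟩ := exists_prime_sep h
      exact ⟨R, hR, fun hiff => haR (hiff.mpr hbR)⟩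
  -- choose a body element W with W ≠ R₀ and W ≠ phi R₀
  obtain ⟨W, hWb, hWR₀, hWφR₀⟩ :
      ∃ W : Set L, W ∈ body L ∧ W ≠ R₀ ∧ W ≠ phi R₀ := by
    by_cases hc : P ≠ R₀ ∧ P ≠ phi R₀
    · exact ⟨P, hPb, hc.1, hc.2⟩
    · rw [not_and_or] at hc
      rcases hc with h | h
      · rw [not_ne_iff] at h
        exact ⟨Q, hQb, h ▸ hQP, h ▸ hQφP⟩
      · rw [not_ne_iff] at h
        have hR₀P : R₀ = phi P := by rw [h, phi_phi]
        exact ⟨Q, hQb, fun he => hQφP (he.trans hR₀P), fun he => hQP (he.trans h.symm)⟩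
  have hWprime : IsPrimeFilter W := hWb.1
  obtain ⟨Wp, hWp, hWWp, hWpne⟩ := exists_gt_of_body hWb
  obtain ⟨Wm, hWm, hWmW, hWmne⟩ := exists_lt_of_body hWb
  -- y₁ : in every maximal prime filter, not in W
  obtain ⟨c₁, hc₁p, hc₁W⟩ : ∃ c, c ∈ Wp ∧ c ∉ W :=
    Set.not_subset.mp (fun hsub => hWpne (Set.Subset.antisymm hsub hWWp))
  have hy₁W : c₁ ⊔ pc c₁ ∉ W := by
    intro h
    rcases (mem_sup_iff hWprime).mp h with h | h
    · exact hc₁W h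
    · have hpcp : pc c₁ ∈ Wp := hWWp h
      have : (⊥ : L) ∈ Wp := by
        have := hWp.2.2.2.1 _ _ hc₁p hpcp
        rwa [inf_pc_self] at this
      exact bot_not_mem hWp this
  have hy₁max : ∀ M : Set L, IsMaximalPF M → c₁ ⊔ pc c₁ ∈ M :=
    fun M hM => max_sup_pc_mem hM c₁
  -- x₂ : in W, in no minimal prime filter
  obtain ⟨c₂, hc₂m, hc₂W⟩ : ∃ c, c ∈ phi Wm ∧ c ∉ phi W := by
    refine Set.not_subset.mp (fun hsub => ?_)
    have hsub2 : phi W ⊆ phi Wm := phi_subset hWmW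
    exact hWmne (phi_inj (Set.Subset.antisymm hsub hsub2))
  have he₂φW : c₂ ⊔ pc c₂ ∉ phi W := by
    intro h
    rcases (mem_sup_iff (phi_prime hWprime)).mp h with h | h
    · exact hc₂W h
    · have hpcm : pc c₂ ∈ phi Wm := phi_subset hWmW h
      have : (⊥ : L) ∈ phi Wm := by
        have := (phi_prime hWm).2.2.2.1 _ _ hc₂m hpcm
        rwa [inf_pc_self] at this
      exact bot_not_mem (phi_prime hWm) this
  have hx₂W : dm (c₂ ⊔ pc c₂) ∈ W := dm_mem_iff.mpr he₂φW
  have hx₂min : ∀ R : Set L, IsMinimalPF R → dm (c₂ ⊔ pc c₂) ∉ R := by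
    intro R hRmin h
    exact (dm_mem_iff.mp h) (max_sup_pc_mem (min_phi_max hRmin) c₂)
  -- pairs handling R₀ and phi R₀
  have class3 : ∀ T : Set L, IsPrimeFilter T → T ≠ W →
      ∃ xT yT : L, xT ∈ W ∧ yT ∉ W ∧ (xT ∉ T ∨ yT ∈ T) := by
    intro T hT hTW
    by_cases hsub : W ⊆ T
    · obtain ⟨yT, hyT, hyTW⟩ :=
        Set.not_subset.mp (fun h => hTW (Set.Subset.antisymm h hsub))
      exact ⟨⊤, yT, top_mem hWprime, hyTW, Or.inr hyT⟩
    · obtain ⟨xT, hxT, hxTT⟩ := Set.not_subset.mp hsub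
      exact ⟨xT, ⊥, hxT, bot_not_mem hWprime, Or.inl hxTT⟩
  obtain ⟨x₃, y₃, hx₃, hy₃, h3⟩ := class3 R₀ hR₀ (Ne.symm hWR₀)
  obtain ⟨x₄, y₄, hx₄, hy₄, h4⟩ := class3 (phi R₀) (phi_prime hR₀) (Ne.symm hWφR₀)
  -- the pair (x ⊓ y, x)
  set x : L := dm (c₂ ⊔ pc c₂) ⊓ x₃ ⊓ x₄ with hxdef
  set y : L := (c₁ ⊔ pc c₁) ⊔ y₃ ⊔ y₄ with hydef
  have hx_le2 : x ≤ dm (c₂ ⊔ pc c₂) := le_trans inf_le_left inf_le_left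
  have hx_le3 : x ≤ x₃ := le_trans inf_le_left inf_le_right
  have hx_le4 : x ≤ x₄ := inf_le_right
  have hy_le1 : c₁ ⊔ pc c₁ ≤ y := le_trans le_sup_left le_sup_left
  have hy_le3 : y₃ ≤ y := le_trans le_sup_right le_sup_left
  have hy_le4 : y₄ ≤ y := le_sup_right
  have hxW : x ∈ W :=
    (mem_inf_iff hWprime).mpr ⟨(mem_inf_iff hWprime).mpr ⟨hx₂W, hx₃⟩, hx₄⟩
  have hyW : y ∉ W := by
    intro h
    rcases (mem_sup_iff hWprime).mp h with h | h
    · rcases (mem_sup_iff hWprime).mp h with h | h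
      · exact hy₁W h
      · exact hy₃ h
    · exact hy₄ h
  -- the removal set C
  set Cs : Set (Set L) := {R | (x ∈ R ∧ y ∉ R) ∨ (x ∈ phi R ∧ y ∉ phi R)} with hCdef
  have hCmax : ∀ M : Set L, IsMaximalPF M → M ∉ Cs := by
    intro M hM h
    rcases h with ⟨hxM, hyM⟩ | ⟨hxφM, hyφM⟩
    · exact hyM (hM.1.2.2.1 _ _ (hy₁max M hM) hy_le1)
    · exact hx₂min (phi M) (max_phi_min hM)
        ((phi_prime hM.1).2.2.1 _ _ hxφM hx_le2)
  have hCphi : ∀ R : Set L, R ∈ Cs → phi R ∈ Cs := by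
    intro R h
    rcases h with h | h
    · right
      rwa [phi_phi]
    · left
      exact h
  have hcong := isCongruence_removal Cs hCmax hCphi
  have hθuv : ∀ R : Set L, IsPrimeFilter R → R ∉ Cs → (x ⊓ y ∈ R ↔ x ∈ R) := by
    intro R hR hRC
    constructor
    · intro h
      exact hR.2.2.1 _ _ h inf_le_left
    · intro hxR
      have hyR : y ∈ R := by
        by_contra hyR
        exact hRC (Or.inl ⟨hxR, hyR⟩)
      exact (mem_inf_iff hR).mpr ⟨hxR, hyR⟩
  have hne' : x ⊓ y ≠ x := by
    intro h
    have hmem : x ⊓ y ∈ W := by rw [h]; exact hxW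
    exact hyW ((mem_inf_iff hWprime).mp hmem).2
  have hθne : (fun u v : L => ∀ R : Set L, IsPrimeFilter R → R ∉ Cs → (u ∈ R ↔ v ∈ R)) ≠
      (fun a b => a = b) := by
    intro h
    have h2 := congrFun (congrFun h (x ⊓ y)) x
    exact hne' (Eq.mp h2 hθuv)
  have habθ := hμmin _ hcong hθne a b hμab
  have hR₀C : R₀ ∉ Cs := by
    intro h
    rcases h with ⟨hxR, hyR⟩ | ⟨hxR, hyR⟩
    · rcases h3 with h3 | h3
      · exact h3 (hR₀.2.2.1 _ _ hxR hx_le3)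
      · exact hyR (hR₀.2.2.1 _ _ h3 hy_le3)
    · rcases h4 with h4 | h4
      · exact h4 ((phi_prime hR₀).2.2.1 _ _ hxR hx_le4)
      · exact hyR ((phi_prime hR₀).2.2.1 _ _ h4 hy_le4)
  exact hR₀ne (habθ R₀ hR₀ hR₀C)
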